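/- Let $A_m$, $A_f$, $A_s$ be square real matrices of sizes $n_m$, $n_f$, $n_s$ respectively, with $A_m$ and $A_f$ invertible, and let $A_{ms}$, $A_{fm}$, $A_{fs}$, $A_{sf}$ be rectangular real matrices of compatible sizes. Define $\tilde{A}_{fs} = A_{fs} - A_{fm} A_m^{-1} A_{ms}$ and the structure Schur complement $S = A_s - A_{sf} A_f^{-1} \tilde{A}_{fs}$. Then $\begin{pmatrix} A_m & 0 & A_{ms} \\ A_{fm} & A_f & A_{fs} \\ 0 & A_{sf} & A_s \end{pmatrix} = \begin{pmatrix} I & 0 & 0 \\ A_{fm} A_m^{-1} & I & 0 \\ 0 & A_{sf} A_f^{-1} & I \end{pmatrix} \begin{pmatrix} A_m & 0 & 0 \\ 0 & A_f & 0 \\ 0 & 0 & S \end{pmatrix} \begin{pmatrix} I & 0 & A_m^{-1} A_{ms} \\ 0 & I & A_f^{-1} \tilde{A}_{fs} \\ 0 & 0 & I \end{pmatrix}$. -/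

import Mathlib

open Matrix

lemma helper_fc {a b c d : Type*} (X : Matrix a c ℝ) :
    fromCols (0 : Matrix (a ⊕ b) d ℝ) (fromRows X (0 : Matrix b c ℝ)) =
      fromBlocks (0 : Matrix a d ℝ) X 0 0 := by
  rw [← fromCols_fromRows_eq_fromBlocks, ← Matrix.fromRows_zero]

/-- The `LDU` factorization of the original (mesh, fluid, structure)-ordered FSI
system matrix based on the structure Schur complement
`S = As - Asf Af⁻¹ Ãfs` with `Ãfs = Afs - Afm Am⁻¹ Ams`. -/
theorem fsi_structure_schur_LDU_factorization
    (nm nf ns : ℕ)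
    (Am : Matrix (Fin nm) (Fin nm) ℝ)
    (Af : Matrix (Fin nf) (Fin nf) ℝ)
    (As : Matrix (Fin ns) (Fin ns) ℝ)
    (Ams : Matrix (Fin nm) (Fin ns) ℝ)
    (Afm : Matrix (Fin nf) (Fin nm) ℝ)
    (Afs : Matrix (Fin nf) (Fin ns) ℝ)
    (Asf : Matrix (Fin ns) (Fin nf) ℝ)
    (hAm : IsUnit Am) (hAf : IsUnit Af) :
    let Atfs : Matrix (Fin nf) (Fin ns) ℝ := Afs - Afm * Am⁻¹ * Ams
    let S : Matrix (Fin ns) (Fin ns) ℝ := As - Asf * Af⁻¹ * Atfs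
    let K : Matrix (Fin nm ⊕ (Fin nf ⊕ Fin ns)) (Fin nm ⊕ (Fin nf ⊕ Fin ns)) ℝ :=
      fromBlocks Am (fromCols 0 Ams) (fromRows Afm 0) (fromBlocks Af Afs Asf As)
    let L : Matrix (Fin nm ⊕ (Fin nf ⊕ Fin ns)) (Fin nm ⊕ (Fin nf ⊕ Fin ns)) ℝ :=
      fromBlocks 1 0 (fromRows (Afm * Am⁻¹) 0) (fromBlocks 1 0 (Asf * Af⁻¹) 1)
    let D : Matrix (Fin nm ⊕ (Fin nf ⊕ Fin ns)) (Fin nm ⊕ (Fin nf ⊕ Fin ns)) ℝ :=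
      fromBlocks Am 0 0 (fromBlocks Af 0 0 S)
    let U : Matrix (Fin nm ⊕ (Fin nf ⊕ Fin ns)) (Fin nm ⊕ (Fin nf ⊕ Fin ns)) ℝ :=
      fromBlocks 1 (fromCols 0 (Am⁻¹ * Ams)) 0 (fromBlocks 1 (Af⁻¹ * Atfs) 0 1)
    K = L * D * U := by
  intro Atfs S K L D U
  have hm : Am * Am⁻¹ = 1 := mul_nonsing_inv _ ((isUnit_iff_isUnit_det _).mp hAm)
  have hm' : Am⁻¹ * Am = 1 := nonsing_inv_mul _ ((isUnit_iff_isUnit_det _).mp hAm)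
  have hf : Af * Af⁻¹ = 1 := mul_nonsing_inv _ ((isUnit_iff_isUnit_det _).mp hAf)
  simp only [K, L, D, U, fromBlocks_multiply, Matrix.mul_one, Matrix.one_mul,
    Matrix.mul_zero, Matrix.zero_mul, add_zero, zero_add,
    fromBlocks_zero, Matrix.fromRows_mul, Matrix.mul_fromCols,
    Matrix.fromCols_zero, Matrix.fromRows_zero]
  rw [helper_fc, fromBlocks_add]
  have hf' : Af⁻¹ * Af = 1 := nonsing_inv_mul _ ((isUnit_iff_isUnit_det _).mp hAf)
  have hfc : ∀ X : Matrix (Fin nf) (Fin ns) ℝ, Af * (Af⁻¹ * X) = X := fun X => by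
    rw [← Matrix.mul_assoc, hf, Matrix.one_mul]
  have hmc : ∀ X : Matrix (Fin nm) (Fin ns) ℝ, Am * (Am⁻¹ * X) = X := fun X => by
    rw [← Matrix.mul_assoc, hm, Matrix.one_mul]
  simp only [Matrix.mul_assoc, hm', hf', Matrix.mul_one, zero_add, hfc, hmc]
  have h1 : Afm * (Am⁻¹ * Ams) + Atfs = Afs := by simp [Atfs, Matrix.mul_assoc]
  have h2 : Asf * (Af⁻¹ * Atfs) + S = As := by simp [S, Matrix.mul_assoc]
  rw [h1, h2]
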